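/- Let R = ℝ[ϖ_1,…,ϖ_n]/(α_i ϖ_i : 1 ≤ i ≤ n) where α_i = -ϖ_{i-1} + 2ϖ_i - ϖ_{i+1} for 1 ≤ i ≤ n-2, α_{n-1} = -ϖ_{n-2} + 2ϖ_{n-1} - 2ϖ_n, and α_n = -ϖ_{n-1} + 2ϖ_n (type B_n Cartan relations; ϖ_0 = 0). Then for all 1 ≤ a ≤ i ≤ n-1, one has ϖ_i · (ϖ_a ϖ_{a+1} ⋯ ϖ_{n-1}) = ((n-i)/(n-a+1)) · ϖ_{a-1} ϖ_a ⋯ ϖ_{n-1} + (2(i-a+1)/(n-a+1)) · ϖ_a ϖ_{a+1} ⋯ ϖ_n. -/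
import Mathlib


open MvPolynomial Finset

set_option maxHeartbeats 1000000 in

theorem stmt_3 (n : ℕ) (hn : 2 ≤ n)
    (ϖ : ℕ → MvPolynomial ℕ ℝ)
    (hϖ : ∀ k, ϖ k = if 1 ≤ k ∧ k ≤ n then X k else 0)
    (α : ℕ → MvPolynomial ℕ ℝ)
    (hα1 : ∀ k, 1 ≤ k → k ≤ n - 2 → α k = -ϖ (k - 1) + 2 * ϖ k - ϖ (k + 1))
    (hα2 : α (n - 1) = -ϖ (n - 2) + 2 * ϖ (n - 1) - 2 * ϖ n)
    (hα3 : α n = -ϖ (n - 1) + 2 * ϖ n)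
    (I : Ideal (MvPolynomial ℕ ℝ))
    (hI : I = Ideal.span {p | ∃ k, 1 ≤ k ∧ k ≤ n ∧ p = α k * ϖ k})
    (a i : ℕ) (ha : 1 ≤ a) (hai : a ≤ i) (hin : i ≤ n - 1) :
    Ideal.Quotient.mk I (ϖ i * ∏ k ∈ Finset.Icc a (n - 1), ϖ k) =
      (((n : ℝ) - i) / ((n : ℝ) - a + 1)) •
          Ideal.Quotient.mk I (∏ k ∈ Finset.Icc (a - 1) (n - 1), ϖ k) +
        (2 * ((i : ℝ) - a + 1) / ((n : ℝ) - a + 1)) •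
          Ideal.Quotient.mk I (∏ k ∈ Finset.Icc a n, ϖ k) := by
  have han : a ≤ n - 1 := hai.trans hin
  have h1n : 1 ≤ n := by omega
  set f := Ideal.Quotient.mk I with hf
  set P : MvPolynomial ℕ ℝ := ∏ k ∈ Finset.Icc a (n - 1), ϖ k with hPdef
  set x : ℕ → MvPolynomial ℕ ℝ ⧸ I := fun k => f (ϖ k * P) with hx
  have hmem : ∀ k, 1 ≤ k → k ≤ n → ∀ q : MvPolynomial ℕ ℝ, f (α k * ϖ k * q) = 0 := by
    intro k h1 h2 q
    rw [hf, Ideal.Quotient.eq_zero_iff_mem, hI]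
    exact Ideal.mul_mem_right q _ (Ideal.subset_span ⟨k, h1, h2, rfl⟩)
  have hP : ∀ k, a ≤ k → k ≤ n - 1 →
      ϖ k * ∏ j ∈ (Finset.Icc a (n - 1)).erase k, ϖ j = P :=
    fun k h1 h2 => Finset.mul_prod_erase _ _ (Finset.mem_Icc.2 ⟨h1, h2⟩)
  have hrec : ∀ k, a ≤ k → k ≤ n - 2 → x (k + 1) - x k = x k - x (k - 1) := by
    intro k h1 h2
    have h0 := hmem k (ha.trans h1) (by omega) (∏ j ∈ (Finset.Icc a (n - 1)).erase k, ϖ j)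
    have key : α k * ϖ k * (∏ j ∈ (Finset.Icc a (n - 1)).erase k, ϖ j)
        = -(ϖ (k - 1) * P) + (ϖ k * P + ϖ k * P) - ϖ (k + 1) * P := by
      rw [hα1 k (ha.trans h1) h2]
      rw [← hP k h1 (by omega)]
      ring
    rw [key] at h0
    simp only [map_add, map_sub, map_neg] at h0
    simp only [hx]
    linear_combination -h0
  have hlast : x n + x n = x (n - 1) + x (n - 1) - x (n - 2) := by
    have h0 := hmem (n - 1) (by omega) (by omega)
      (∏ j ∈ (Finset.Icc a (n - 1)).erase (n - 1), ϖ j)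
    have key : α (n - 1) * ϖ (n - 1) * (∏ j ∈ (Finset.Icc a (n - 1)).erase (n - 1), ϖ j)
        = -(ϖ (n - 2) * P) + (ϖ (n - 1) * P + ϖ (n - 1) * P) - (ϖ n * P + ϖ n * P) := by
      rw [hα2]
      rw [← hP (n - 1) han le_rfl]
      ring
    rw [key] at h0
    simp only [map_add, map_sub, map_neg] at h0
    simp only [hx]
    linear_combination -h0
  set d := x a - x (a - 1) with hd
  have hdiff : ∀ m, a + m ≤ n - 1 → x (a + m) - x (a + m - 1) = d := by
    intro m
    induction m with
    | zero => intro _; simp [hd]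
    | succ m ih =>
      intro h
      rw [show a + (m + 1) - 1 = a + m from by omega,
        show a + (m + 1) = a + m + 1 from by omega]
      rw [hrec (a + m) (by omega) (by omega)]
      exact ih (by omega)
  have hsum : ∀ j, j ≤ n - a → x (a - 1 + j) = x (a - 1) + (j : ℝ) • d := by
    intro j
    induction j with
    | zero => intro _; simp
    | succ j ih =>
      intro h
      have h3 := hdiff j (by omega)
      rw [show a + j - 1 = a - 1 + j from by omega] at h3
      rw [show a - 1 + (j + 1) = a + j from by omega]
      have h4 : x (a + j) = d + x (a - 1 + j) := by rw [← h3]; ring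
      rw [h4, ih (by omega)]
      push_cast
      module
  have hxi : x i = x (a - 1) + ((i : ℝ) - a + 1) • d := by
    have h := hsum (i - a + 1) (by omega)
    rw [show a - 1 + (i - a + 1) = i from by omega] at h
    rw [Nat.cast_add, Nat.cast_sub hai, Nat.cast_one] at h
    exact h
  have hxn1 : x (n - 1) = x (a - 1) + ((n : ℝ) - a) • d := by
    have h := hsum (n - a) le_rfl
    rw [show a - 1 + (n - a) = n - 1 from by omega] at h
    rw [Nat.cast_sub (show a ≤ n by omega)] at h
    exact h
  have hxn2 : x (n - 2) = x (a - 1) + ((n : ℝ) - 1 - a) • d := by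
    have h := hsum (n - 1 - a) (by omega)
    rw [show a - 1 + (n - 1 - a) = n - 2 from by omega] at h
    rw [Nat.cast_sub (show a ≤ n - 1 by omega),
      Nat.cast_sub (show 1 ≤ n by omega), Nat.cast_one] at h
    exact h
  have hNd : ((n : ℝ) - a + 1) • d = x n + x n - x (a - 1) := by
    rw [hlast, hxn1, hxn2]
    module
  have hN : ((n : ℝ) - a + 1) ≠ 0 := by
    have hc : (a : ℝ) ≤ n := Nat.cast_le.2 (by omega)
    have : (0 : ℝ) < (n : ℝ) - a + 1 := by linarith
    exact ne_of_gt this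
  have hmain : ((n : ℝ) - a + 1) • x i
      = ((n : ℝ) - i) • x (a - 1) + (2 * ((i : ℝ) - a + 1)) • x n := by
    have ht : ((n : ℝ) - a + 1) • (((i : ℝ) - a + 1) • d)
        = ((i : ℝ) - a + 1) • (x n + x n - x (a - 1)) := by
      rw [smul_comm, hNd]
    rw [hxi, smul_add, ht]
    module
  have hfin := congrArg (fun z => ((n : ℝ) - a + 1)⁻¹ • z) hmain
  simp only [smul_smul, smul_add] at hfin
  rw [inv_mul_cancel₀ hN, one_smul] at hfin
  have hQtop : (∏ k ∈ Finset.Icc a n, ϖ k) = ϖ n * P := by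
    have e2 : n - 1 + 1 = n := by omega
    calc (∏ k ∈ Finset.Icc a n, ϖ k) = ∏ k ∈ Finset.Icc a ((n - 1) + 1), ϖ k := by rw [e2]
      _ = (∏ k ∈ Finset.Icc a (n - 1), ϖ k) * ϖ ((n - 1) + 1) :=
          Finset.prod_Icc_succ_top (by omega) _
      _ = ϖ n * P := by rw [e2, hPdef, mul_comm]
  have hQbot : (∏ k ∈ Finset.Icc (a - 1) (n - 1), ϖ k) = ϖ (a - 1) * P := by
    have e : ∀ b : ℕ, Finset.Icc b (n - 1) = Finset.Ico b n := by
      intro b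
      rw [← Finset.Ico_add_one_right_eq_Icc]
      congr 1
      omega
    rw [e (a - 1), Finset.prod_eq_prod_Ico_succ_bot (show a - 1 < n by omega),
      show a - 1 + 1 = a from by omega, hPdef, e a]
  rw [hQtop, hQbot]
  rw [div_eq_inv_mul, div_eq_inv_mul]
  exact hfin
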